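/- Let b_1, …, b_r be a T-chain with r ≥ 2 and parameters (d, n, a) with n ≥ 3. Then exactly one of b_1, b_r is equal to 2 (a T-chain of index at least 3 has a 2 at exactly one of its two ends). -/

import Mathlib

/-- Hirzebruch–Jung continued fraction of a list of integers:
`hjcf [] = 0` (junk value), `hjcf (b :: l) = b - 1 / hjcf l`.
Since `(0 : ℚ)⁻¹ = 0`, this gives `hjcf [b] = b`, matching the recursion
`[b_r] = b_r`, `[b_1, …, b_r] = b_1 − 1/[b_2, …, b_r]`. -/
def hjcf : List ℤ → ℚ
  | [] => 0
  | b :: l => (b : ℚ) - (hjcf l)⁻¹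

/-- `IsTChain l d n a` : the nonempty list `l` of integers, all ≥ 2, is a T-chain
with parameters `(d, n, a)`, i.e. its Hirzebruch–Jung continued fraction equals
`d n² / (d n a − 1)` where `d ≥ 1`, `n ≥ 2`, `0 < a < n`, `gcd(n, a) = 1`. -/
def IsTChain (l : List ℤ) (d n a : ℤ) : Prop :=
  l ≠ [] ∧ (∀ b ∈ l, 2 ≤ b) ∧
  1 ≤ d ∧ 2 ≤ n ∧ 0 < a ∧ a < n ∧ Int.gcd n a = 1 ∧
  hjcf l = (d * n ^ 2 : ℚ) / (d * n * a - 1)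

/-- Continuant matrix data of a list: `(p, q, u, v)` are the entries of the
matrix `M(b₁) ⋯ M(b_r)` where `M(b) = [[b,-1],[1,0]]`. -/
def PM (l : List ℤ) : ℤ × ℤ × ℤ × ℤ :=
  l.foldr (fun b x => (b * x.1 - x.2.1, x.1, b * x.2.2.1 - x.2.2.2, x.2.2.1)) (1, 0, 0, 1)

def pP (l : List ℤ) : ℤ := (PM l).1
def qP (l : List ℤ) : ℤ := (PM l).2.1
def uP (l : List ℤ) : ℤ := (PM l).2.2.1
def vP (l : List ℤ) : ℤ := (PM l).2.2.2

@[simp] lemma pP_nil : pP [] = 1 := rfl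
@[simp] lemma qP_nil : qP [] = 0 := rfl
@[simp] lemma uP_nil : uP [] = 0 := rfl
@[simp] lemma vP_nil : vP [] = 1 := rfl
@[simp] lemma pP_cons (b : ℤ) (l : List ℤ) : pP (b :: l) = b * pP l - qP l := rfl
@[simp] lemma qP_cons (b : ℤ) (l : List ℤ) : qP (b :: l) = pP l := rfl
@[simp] lemma uP_cons (b : ℤ) (l : List ℤ) : uP (b :: l) = b * uP l - vP l := rfl
@[simp] lemma vP_cons (b : ℤ) (l : List ℤ) : vP (b :: l) = uP l := rfl

lemma hjcf_key (l : List ℤ) (h2 : ∀ b ∈ l, 2 ≤ b) :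
    qP l < pP l ∧ 0 ≤ qP l ∧ hjcf l = (pP l : ℚ) / (qP l : ℚ) := by
  induction l with
  | nil => refine ⟨by simp, le_refl _, ?_⟩; simp [hjcf]
  | cons b t ih =>
    obtain ⟨h1, h0, heq⟩ := ih fun c hc => h2 c (List.mem_cons_of_mem _ hc)
    have hb : 2 ≤ b := h2 b List.mem_cons_self
    have hppos : 0 < pP t := lt_of_le_of_lt h0 h1
    refine ⟨?_, by simpa using hppos.le, ?_⟩
    · simp only [pP_cons, qP_cons]; nlinarith
    · have hpne : (pP t : ℚ) ≠ 0 := by exact_mod_cast hppos.ne'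
      show (b : ℚ) - (hjcf t)⁻¹ = _
      rw [heq, inv_div]
      simp only [pP_cons, qP_cons]
      push_cast
      field_simp

lemma qP_pos (l : List ℤ) (hne : l ≠ []) (h2 : ∀ b ∈ l, 2 ≤ b) : 1 ≤ qP l := by
  obtain ⟨c, s, rfl⟩ := List.exists_cons_of_ne_nil hne
  obtain ⟨h1, h0, -⟩ := hjcf_key s fun b hb => h2 b (List.mem_cons_of_mem _ hb)
  have := lt_of_le_of_lt h0 h1
  simp only [qP_cons]; omega

lemma coprP (l : List ℤ) : IsCoprime (pP l) (qP l) := by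
  induction l with
  | nil => simpa using isCoprime_one_left
  | cons b t ih =>
    simp only [pP_cons, qP_cons]
    have h := (ih.symm.neg_left).add_mul_left_left b
    have e : -qP t + pP t * b = b * pP t - qP t := by ring
    rwa [e] at h

lemma detP (l : List ℤ) : pP l * vP l - uP l * qP l = 1 := by
  induction l with
  | nil => simp
  | cons b t ih =>
    simp only [pP_cons, qP_cons, uP_cons, vP_cons]
    linear_combination ih

lemma PM_append_singleton (l : List ℤ) (b : ℤ) :
    pP (l ++ [b]) = b * pP l + uP l ∧ qP (l ++ [b]) = b * qP l + vP l ∧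
    uP (l ++ [b]) = -pP l ∧ vP (l ++ [b]) = -qP l := by
  induction l with
  | nil => refine ⟨?_, ?_, ?_, ?_⟩ <;> simp
  | cons c t ih =>
    obtain ⟨h1, h2, h3, h4⟩ := ih
    refine ⟨?_, ?_, ?_, ?_⟩ <;>
      simp only [List.cons_append, pP_cons, qP_cons, uP_cons, vP_cons, h1, h2, h3, h4] <;>
      ring

lemma PM_reverse (l : List ℤ) :
    pP l.reverse = pP l ∧ qP l.reverse = -uP l ∧ uP l.reverse = -qP l ∧
    vP l.reverse = vP l := by
  induction l with
  | nil => simp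
  | cons b t ih =>
    obtain ⟨h1, h2, h3, h4⟩ := ih
    obtain ⟨g1, g2, g3, g4⟩ := PM_append_singleton t.reverse b
    rw [List.reverse_cons]
    refine ⟨?_, ?_, ?_, ?_⟩
    · rw [g1, h1, h3]; simp only [pP_cons]; ring
    · rw [g2, h2, h4]; simp only [uP_cons]; ring
    · rw [g3, h1]; simp only [qP_cons]
    · rw [g4, h2]; simp only [vP_cons]; ring

lemma head_two_iff (b : ℤ) (t : List ℤ) (ht : t ≠ []) (h2 : ∀ c ∈ b :: t, 2 ≤ c) :
    b = 2 ↔ pP (b :: t) < 2 * qP (b :: t) := by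
  have htall : ∀ c ∈ t, 2 ≤ c := fun c hc => h2 c (List.mem_cons_of_mem _ hc)
  have hb : 2 ≤ b := h2 b List.mem_cons_self
  obtain ⟨h1, h0, -⟩ := hjcf_key t htall
  have hq1 : 1 ≤ qP t := qP_pos t ht htall
  simp only [pP_cons, qP_cons]
  constructor
  · rintro rfl; nlinarith
  · intro hlt
    by_contra hb2
    have hb3 : 3 ≤ b := by omega
    nlinarith

lemma frac_unique {p q p' q' : ℤ} (hq : 0 < q) (hq' : 0 < q')
    (hc : IsCoprime p q) (hc' : IsCoprime p' q')
    (h : (p : ℚ) / q = (p' : ℚ) / q') : p = p' ∧ q = q' := by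
  have hq0 : (q : ℚ) ≠ 0 := by exact_mod_cast hq.ne'
  have hq'0 : (q' : ℚ) ≠ 0 := by exact_mod_cast hq'.ne'
  have hcross : p * q' = p' * q := by
    field_simp at h
    have h' : p * q' = q * p' := by exact_mod_cast h
    linarith
  have h1 : q ∣ q' := hc.symm.dvd_of_dvd_mul_left ⟨p', by linarith⟩
  have h2 : q' ∣ q := hc'.symm.dvd_of_dvd_mul_left ⟨p, by linarith⟩
  have hqq : q = q' := Int.dvd_antisymm hq.le hq'.le h1 h2
  subst hqq
  exact ⟨mul_right_cancel₀ hq.ne' hcross, rfl⟩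

lemma getD_last_of_reverse (l : List ℤ) (b' : ℤ) (t' : List ℤ)
    (h : l.reverse = b' :: t') : l.getD (l.length - 1) 0 = b' := by
  have hl : l = t'.reverse ++ [b'] := by
    rw [← l.reverse_reverse, h, List.reverse_cons]
  rw [hl]
  have hlen : (t'.reverse ++ [b']).length - 1 = t'.reverse.length := by simp
  rw [hlen, List.getD_eq_getElem?_getD, List.getElem?_concat_length]
  rfl

lemma arith_iff (d n a : ℤ) (hd : 1 ≤ d) (hn : 3 ≤ n) (ha0 : 0 < a) (han : a < n)
    (hna : n ≠ 2 * a) : d * n ^ 2 < 2 * (d * n * a - 1) ↔ n < 2 * a := by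
  constructor
  · intro hlt
    by_contra hge
    push_neg at hge
    nlinarith [mul_nonneg (mul_nonneg (by linarith : (0:ℤ) ≤ d)
      (by linarith : (0:ℤ) ≤ n)) (by linarith : (0:ℤ) ≤ n - 2 * a)]
  · intro hlt
    have h1 : 1 ≤ 2 * a - n := by omega
    have h2 : d * n * 1 ≤ d * n * (2 * a - n) := by
      apply mul_le_mul_of_nonneg_left h1
      nlinarith
    nlinarith

theorem tchain_exactly_one_end_two (l : List ℤ) (d n a : ℤ) (h : IsTChain l d n a)
    (hr : 2 ≤ l.length) (hn : 3 ≤ n) :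
    Xor' (l.getD 0 0 = 2) (l.getD (l.length - 1) 0 = 2) := by
  obtain ⟨hne, hall, hd, hn2, ha0, han, hgcd, hval⟩ := h
  obtain ⟨hqp, hq0, heq⟩ := hjcf_key l hall
  have hcop := coprP l
  have hcopd : IsCoprime d (d * n * a - 1) := ⟨n * a, -1, by ring⟩
  have hcopn : IsCoprime n (d * n * a - 1) := ⟨d * a, -1, by ring⟩
  have hcop' : IsCoprime (d * n ^ 2) (d * n * a - 1) := by
    have h' := hcopd.mul_left (hcopn.mul_left hcopn)
    have e : d * (n * n) = d * n ^ 2 := by ring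
    rwa [e] at h'
  have hdn3 : 3 ≤ d * n := by
    have := le_mul_of_one_le_left (show (0:ℤ) ≤ n by omega) hd
    linarith
  have hqpos : 0 < d * n * a - 1 := by
    have := le_mul_of_one_le_right (show (0:ℤ) ≤ d * n by linarith) (show (1:ℤ) ≤ a by omega)
    linarith
  have hq1 : 1 ≤ qP l := qP_pos l hne hall
  have hval' : hjcf l = ((d * n ^ 2 : ℤ) : ℚ) / ((d * n * a - 1 : ℤ) : ℚ) := by
    push_cast
    exact hval
  obtain ⟨hP, hQ⟩ := frac_unique (by omega : (0 : ℤ) < qP l) hqpos hcop hcop'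
    (heq.symm.trans hval')
  -- reversal data
  obtain ⟨rp, rq, ru, rv⟩ := PM_reverse l
  have hdet := detP l
  have hallrev : ∀ b ∈ l.reverse, 2 ≤ b := fun b hb => hall b (List.mem_reverse.mp hb)
  have hnerev : l.reverse ≠ [] := by
    simpa [List.reverse_eq_nil_iff] using hne
  obtain ⟨hqp', hq0', -⟩ := hjcf_key l.reverse hallrev
  have hq1' : 1 ≤ qP l.reverse := qP_pos _ hnerev hallrev
  -- identify the denominator of the reversed chain
  have key : qP l * ((d * n * (n - a) - 1) + uP l) = pP l * ((d * a * (n - a) - 1) + vP l) := by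
    rw [hP, hQ] at hdet ⊢
    linear_combination -hdet
  have hdvd : pP l ∣ (d * n * (n - a) - 1) + uP l :=
    hcop.dvd_of_dvd_mul_left ⟨(d * a * (n - a) - 1) + vP l, key⟩
  have hu1 : uP l ≤ -1 := by linarith [hq1', rq.le, rq.ge]
  have hu2 : -pP l < uP l := by
    have h' : qP l.reverse < pP l.reverse := hqp'
    rw [rp, rq] at h'
    linarith
  have hB1 : 1 ≤ d * n * (n - a) - 1 := by
    have := le_mul_of_one_le_right (show (0:ℤ) ≤ d * n by linarith) (show (1:ℤ) ≤ n - a by omega)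
    linarith
  have hB2 : d * n * (n - a) - 1 < pP l := by
    rw [hP]
    have h1 : d * n * (n - a) ≤ d * n * (n - 1) :=
      mul_le_mul_of_nonneg_left (by omega) (by linarith)
    nlinarith
  have hzero : (d * n * (n - a) - 1) + uP l = 0 := by
    refine Int.eq_zero_of_abs_lt_dvd hdvd ?_
    rw [abs_lt]
    exact ⟨by linarith, by linarith⟩
  have hqrev : qP l.reverse = d * n * (n - a) - 1 := by rw [rq]; linarith
  -- decompose l and l.reverse
  obtain ⟨b, t, rfl⟩ := List.exists_cons_of_ne_nil hne
  have ht : t ≠ [] := by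
    cases t with
    | nil => simp at hr
    | cons _ _ => simp
  obtain ⟨b', t', hrev⟩ := List.exists_cons_of_ne_nil hnerev
  have ht' : t' ≠ [] := by
    cases t' with
    | nil =>
      have h2' : b :: t = [b'] := by
        have h3' := congrArg List.reverse hrev
        simpa using h3'
      rw [h2'] at hr
      simp at hr
    | cons _ _ => simp
  have hne2a : n ≠ 2 * a := by
    intro hna
    have hdvda : a ∣ n := ⟨2, by omega⟩
    have hu' := (Int.isCoprime_iff_gcd_eq_one.mpr hgcd).isUnit_of_dvd' hdvda dvd_rfl
    rw [Int.isUnit_iff] at hu'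
    omega
  -- first end
  have hfirst : (b :: t).getD 0 0 = b := rfl
  have hA : (b :: t).getD 0 0 = 2 ↔ n < 2 * a := by
    rw [hfirst, head_two_iff b t ht hall, hP, hQ]
    exact arith_iff d n a hd hn ha0 han hne2a
  -- last end
  have hlast := getD_last_of_reverse (b :: t) b' t' hrev
  have hB : (b :: t).getD ((b :: t).length - 1) 0 = 2 ↔ 2 * a < n := by
    rw [hlast]
    have hall' : ∀ c ∈ b' :: t', 2 ≤ c := by rw [← hrev]; exact hallrev
    have h1 := head_two_iff b' t' ht' hall'
    rw [← hrev] at h1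
    rw [h1, rp, hP, hqrev]
    have e : n - (n - a) = a := by ring
    have := arith_iff d n (n - a) hd hn (by omega) (by omega) (by omega)
    rw [this]
    omega
  rw [hA, hB]
  unfold Xor'
  rcases lt_or_gt_of_ne hne2a with hlt | hlt
  · exact Or.inl ⟨hlt, by omega⟩
  · exact Or.inr ⟨hlt, by omega⟩
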